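/- If S is a right cancellative discrete semigroup containing more than one element, then S is not extremely left amenable; equivalently, a right cancellative extremely left amenable semigroup is trivial. -/
import Mathlib


open BoundedContinuousFunction

/-- A discrete semigroup `S` is extremely left amenable: `ℓ∞(S)` admits a multiplicative
left invariant mean. -/
def ExtremelyLeftAmenable (S : Type*) [Semigroup S] [TopologicalSpace S]
    [DiscreteTopology S] : Prop :=
  ∃ m : (S →ᵇ ℝ) →L[ℝ] ℝ, ‖m‖ = 1 ∧ m 1 = 1 ∧
    (∀ f g : S →ᵇ ℝ, m (f * g) = m f * m g) ∧
    (∀ (s : S) (f : S →ᵇ ℝ),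
      m (f.compContinuous ⟨fun t => s * t, continuous_of_discreteTopology⟩) = m f)

section Coloring

/-- Finite version of Katětov's three-set lemma: any finite set of constraints from a
fixed-point-free map can be properly 3-colored. -/
lemma finite_coloring {X : Type*} (f : X → X) (hf : ∀ x, f x ≠ x) (F : Finset X) :
    ∃ χ : X → Fin 3, ∀ x ∈ F, χ x ≠ χ (f x) := by
  classical
  induction F using Finset.strongInduction with
  | _ F ih =>
    rcases F.eq_empty_or_nonempty with rfl | hF
    · exact ⟨fun _ => 0, by simp⟩
    have hx : ∃ x ∈ F, ∀ y ∈ F, ∀ z ∈ F, f y = x → f z = x → y = z := by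
      by_cases hsub : ∀ x ∈ F, ∃ y ∈ F, f y = x
      · have himg : F ⊆ F.image f := by
          intro x hxF
          obtain ⟨y, hy, hyx⟩ := hsub x hxF
          exact Finset.mem_image.mpr ⟨y, hy, hyx⟩
        have heq : F = F.image f :=
          Finset.eq_of_subset_of_card_le himg Finset.card_image_le
        have hinj : Set.InjOn f F := Finset.injOn_of_card_image_eq (by rw [← heq])
        obtain ⟨x, hxF⟩ := hF
        exact ⟨x, hxF, fun y hy z hz h1 h2 => hinj hy hz (h1.trans h2.symm)⟩
      · push_neg at hsub
        obtain ⟨x, hxF, hnone⟩ := hsub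
        exact ⟨x, hxF, fun y hy z hz h1 _ => absurd h1 (hnone y hy)⟩
    obtain ⟨x, hxF, huniq⟩ := hx
    obtain ⟨χ, hχ⟩ := ih (F.erase x) (Finset.erase_ssubset hxF)
    set P : Finset (Fin 3) :=
      insert (χ (f x)) (((F.erase x).filter fun y => f y = x).image χ) with hP
    have hfilter : (((F.erase x).filter fun y => f y = x)).card ≤ 1 := by
      apply Finset.card_le_one.mpr
      intro a ha b hb
      simp only [Finset.mem_filter, Finset.mem_erase] at ha hb
      exact huniq a ha.1.2 b hb.1.2 ha.2 hb.2
    have hPcard : P.card ≤ 2 := by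
      have h1 := Finset.card_insert_le (χ (f x))
        (((F.erase x).filter fun y => f y = x).image χ)
      have h2 := Finset.card_image_le (s := (F.erase x).filter fun y => f y = x) (f := χ)
      rw [hP]
      omega
    have hvex : ∃ v : Fin 3, v ∉ P := by
      by_contra h
      push_neg at h
      have hsubP : (Finset.univ : Finset (Fin 3)) ⊆ P := fun v _ => h v
      have := Finset.card_le_card hsubP
      simp at this
      omega
    obtain ⟨v, hv⟩ := hvex
    refine ⟨Function.update χ x v, ?_⟩
    intro z hz
    rcases eq_or_ne z x with rfl | hzx
    · rw [Function.update_self, Function.update_of_ne (hf z)]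
      intro hcontra
      exact hv (hcontra ▸ Finset.mem_insert_self _ _)
    · rw [Function.update_of_ne hzx]
      rcases eq_or_ne (f z) x with hfz | hfz
      · rw [hfz, Function.update_self]
        intro hcontra
        refine hv (hcontra ▸ Finset.mem_insert_of_mem ?_)
        exact Finset.mem_image_of_mem χ
          (Finset.mem_filter.mpr ⟨Finset.mem_erase.mpr ⟨hzx, hz⟩, hfz⟩)
      · rw [Function.update_of_ne hfz]
        exact hχ z (Finset.mem_erase.mpr ⟨hzx, hz⟩)

/-- Katětov's three-set lemma, coloring form: a fixed-point-free map admits a proper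
3-coloring. Proved from the finite case by an ultrafilter compactness argument. -/
lemma exists_coloring {X : Type*} (f : X → X) (hf : ∀ x, f x ≠ x) :
    ∃ χ : X → Fin 3, ∀ x, χ x ≠ χ (f x) := by
  classical
  choose c hc using finite_coloring f hf
  let U : Ultrafilter (Finset X) := Ultrafilter.of Filter.atTop
  have hU : ∀ x : X, {F : Finset X | x ∈ F} ∈ U := by
    intro x
    have h1 : {F : Finset X | {x} ≤ F} ∈ (Filter.atTop : Filter (Finset X)) :=
      Filter.mem_atTop _
    have h2 : {F : Finset X | {x} ≤ F} ∈ U := Ultrafilter.of_le _ h1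
    exact Filter.mem_of_superset h2 fun F hF => Finset.singleton_subset_iff.mp hF
  have hval : ∀ x : X, ∃ v : Fin 3, {F : Finset X | c F x = v} ∈ U := by
    intro x
    have htri : ∀ w : Fin 3, w = 0 ∨ w = 1 ∨ w = 2 := by decide
    have huniv : {F : Finset X | c F x = 0} ∪
        ({F | c F x = 1} ∪ {F | c F x = 2}) = Set.univ := by
      ext F
      simpa using htri (c F x)
    have hmem : (Set.univ : Set (Finset X)) ∈ U := Filter.univ_mem
    rw [← huniv] at hmem
    rcases Ultrafilter.union_mem_iff.mp hmem with h | h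
    · exact ⟨0, h⟩
    rcases Ultrafilter.union_mem_iff.mp h with h | h
    exacts [⟨1, h⟩, ⟨2, h⟩]
  choose χ hχ using hval
  refine ⟨χ, fun x hcontra => ?_⟩
  have hmem : {F : Finset X | c F x = χ x} ∩
      ({F | c F (f x) = χ (f x)} ∩ {F | x ∈ F}) ∈ U :=
    Filter.inter_mem (hχ x) (Filter.inter_mem (hχ (f x)) (hU x))
  obtain ⟨F, h1, h2, h3⟩ := Ultrafilter.nonempty_of_mem hmem
  exact hc F x h3 (h1.trans (hcontra.trans h2.symm))

end Coloring

section Indicator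

open scoped Classical

variable {S : Type*} [TopologicalSpace S] [DiscreteTopology S]

/-- The indicator function of a set as a bounded continuous function on a discrete space. -/
noncomputable def ind (A : Set S) : S →ᵇ ℝ :=
  ⟨⟨fun t => if t ∈ A then 1 else 0, continuous_of_discreteTopology⟩, 2, by
    intro x y
    dsimp
    split_ifs <;> simp [Real.dist_eq]⟩

lemma ind_apply (A : Set S) (t : S) : ind A t = if t ∈ A then 1 else 0 := rfl

lemma ind_univ : ind (Set.univ : Set S) = 1 := by
  ext t
  simp [ind_apply]

lemma ind_empty : ind (∅ : Set S) = 0 := by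
  ext t
  simp [ind_apply]

lemma ind_mul (A B : Set S) : ind A * ind B = ind (A ∩ B) := by
  ext t
  by_cases hA : t ∈ A <;> by_cases hB : t ∈ B <;>
    simp [ind_apply, hA, hB]

end Indicator

/-- A right cancellative extremely left amenable discrete semigroup is trivial. -/
theorem rightCancellative_extremelyLeftAmenable_subsingleton (S : Type*) [Semigroup S]
    [TopologicalSpace S] [DiscreteTopology S]
    (hrc : ∀ a b c : S, a * c = b * c → a = b)
    (hela : ExtremelyLeftAmenable S) :
    ∀ a b : S, a = b := by
  classical
  obtain ⟨m, hnorm, h1, hmul, hinv⟩ := hela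
  -- the mean of an indicator is 0 or 1
  have hdichot : ∀ A : Set S, m (ind A) = 0 ∨ m (ind A) = 1 := by
    intro A
    have hsq : ind A * ind A = ind A := by
      rw [ind_mul, Set.inter_self]
    have h := hmul (ind A) (ind A)
    rw [hsq] at h
    have h' : m (ind A) * (m (ind A) - 1) = 0 := by ring_nf; linarith [h]
    rcases mul_eq_zero.mp h' with h'' | h''
    · exact Or.inl h''
    · right; linarith
  -- left translation maps on indicators
  have hcomp : ∀ (s : S) (A : Set S),
      (ind A).compContinuous ⟨fun t => s * t, continuous_of_discreteTopology⟩
        = ind ((fun t => s * t) ⁻¹' A) := by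
    intro s A
    ext t
    rfl
  -- step 1: every left translation has a fixed point
  have fp : ∀ s : S, ∃ t : S, s * t = t := by
    intro s
    by_contra hfix
    push_neg at hfix
    obtain ⟨χ, hχ⟩ := exists_coloring (fun t => s * t) hfix
    -- the sum of the three indicators is 1
    have hsum : (∑ v : Fin 3, ind (χ ⁻¹' {v})) = (1 : S →ᵇ ℝ) := by
      ext t
      rw [BoundedContinuousFunction.coe_sum, Finset.sum_apply]
      simp only [ind_apply, Set.mem_preimage, Set.mem_singleton_iff]
      rw [Finset.sum_ite_eq (Finset.univ : Finset (Fin 3)) (χ t) (fun _ => (1 : ℝ))]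
      simp
    have hexists : ∃ v : Fin 3, m (ind (χ ⁻¹' {v})) = 1 := by
      by_contra h
      push_neg at h
      have hall : ∀ v : Fin 3, m (ind (χ ⁻¹' {v})) = 0 :=
        fun v => (hdichot _).resolve_right (h v)
      have hs : m (∑ v : Fin 3, ind (χ ⁻¹' {v})) = 1 := by rw [hsum, h1]
      rw [map_sum] at hs
      rw [Finset.sum_eq_zero (fun v _ => hall v)] at hs
      linarith
    obtain ⟨v, hv⟩ := hexists
    set A : Set S := χ ⁻¹' {v} with hA
    have hpre : m (ind ((fun t => s * t) ⁻¹' A)) = 1 := by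
      have h := hinv s (ind A)
      rw [hcomp s A] at h
      rw [h, hv]
    have hint : A ∩ ((fun t => s * t) ⁻¹' A) = ∅ := by
      ext t
      simp only [Set.mem_inter_iff, Set.mem_preimage, Set.mem_empty_iff_false, iff_false,
        not_and, hA, Set.mem_singleton_iff]
      intro h1' h2'
      exact hχ t (h1'.trans h2'.symm)
    have hprod := hmul (ind A) (ind ((fun t => s * t) ⁻¹' A))
    rw [ind_mul, hint, ind_empty, map_zero, hv, hpre] at hprod
    linarith
  -- step 2: every element is idempotent
  have idem : ∀ s : S, s * s = s := by
    intro s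
    obtain ⟨t, ht⟩ := fp s
    apply hrc (s * s) s t
    rw [mul_assoc, ht, ht]
  -- step 3: S is a left zero semigroup
  have lz : ∀ x y : S, x * y = x := by
    intro x y
    apply hrc (x * y) x (x * y)
    rw [idem (x * y), ← mul_assoc, idem x]
  -- step 4: conclude
  intro a b
  by_contra hab
  have ha : m (ind ({a} : Set S)) = 1 := by
    have h := hinv a (ind ({a} : Set S))
    rw [hcomp a {a}] at h
    have hpre : (fun t => a * t) ⁻¹' ({a} : Set S) = Set.univ := by
      ext t
      simp [lz a t]
    rw [hpre, ind_univ, h1] at h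
    exact h.symm
  have hb : m (ind ({a} : Set S)) = 0 := by
    have h := hinv b (ind ({a} : Set S))
    rw [hcomp b {a}] at h
    have hpre : (fun t => b * t) ⁻¹' ({a} : Set S) = ∅ := by
      ext t
      simp only [Set.mem_preimage, Set.mem_singleton_iff, Set.mem_empty_iff_false, iff_false]
      rw [lz b t]
      exact fun h' => hab h'.symm
    rw [hpre, ind_empty, map_zero] at h
    exact h.symm
  linarith
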